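/- arXiv:1907.04140 — 4 statements merged into one kernel-verified Lean document; each statement's English description precedes it below -/
import Mathlib

section
/- Let λ be a complex number of modulus 1 such that there exist C, r > 0 with |∑_{j=m}^{N} λ^{ℓj}| < C ℓ^r for all positive integers ℓ and 0 < m < N, and let κ be purely imaginary. Then there exists C̃ > 0 such that for all positive integers n, ℓ: |∑_{k=n}^{∞} (e^{κ ℓ log k}/k) λ^{kℓ}| < C̃ ℓ^{r+1} / n. -/
open Complex Finset Filter

-- helper 1: exp on circle is 2-Lipschitz (crude)
lemma exp_I_dist (x y : ℝ) :
    ‖Complex.exp (x * I) - Complex.exp (y * I)‖ ≤ 2 * |x - y| := by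
  have h : Complex.exp (x * I) - Complex.exp (y * I)
      = Complex.exp (y * I) * (Complex.exp (((x - y : ℝ) : ℂ) * I) - 1) := by
    rw [mul_sub, mul_one, ← Complex.exp_add]
    push_cast
    ring_nf
  rw [h, norm_mul, Complex.norm_exp_ofReal_mul_I, one_mul]
  have habs : ‖((x - y : ℝ) : ℂ) * I‖ = |x - y| := by
    rw [norm_mul, Complex.norm_I, mul_one, Complex.norm_real, Real.norm_eq_abs]
  rcases le_or_gt |x - y| 1 with hle | hlt
  · have := Complex.norm_exp_sub_one_le (x := ((x - y : ℝ) : ℂ) * I) (by rw [habs]; exact hle)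
    rwa [habs] at this
  · have h1 : ‖Complex.exp (((x - y : ℝ) : ℂ) * I) - 1‖ ≤ 2 := by
      calc ‖Complex.exp (((x - y : ℝ) : ℂ) * I) - 1‖
          ≤ ‖Complex.exp (((x - y : ℝ) : ℂ) * I)‖ + ‖1‖ :=
            norm_sub_le _ _
        _ ≤ 2 := by rw [Complex.norm_exp_ofReal_mul_I]; norm_num
    linarith

-- helper 2: Abel summation
lemma abel_sum (f a : ℕ → ℂ) (n : ℕ) : ∀ N, n ≤ N →
    ∑ k ∈ Icc n N, f k * a k
      = f N * (∑ j ∈ Icc n N, a j)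
        + ∑ k ∈ Ico n N, (f k - f (k + 1)) * (∑ j ∈ Icc n k, a j) := by
  intro N hN
  induction N, hN using Nat.le_induction with
  | base => simp
  | succ N hN ih =>
      rw [Finset.sum_Icc_succ_top (le_trans hN (Nat.le_succ _)),
          Finset.sum_Icc_succ_top (le_trans hN (Nat.le_succ _)),
          ih, Finset.sum_Ico_succ_top hN]
      ring

-- helper 3: sum of 1/k^2
lemma sum_inv_sq (n : ℕ) (hn : 0 < n) : ∀ N, n ≤ N →
    ∑ k ∈ Ico n N, (1 : ℝ) / (k : ℝ) ^ 2 ≤ 2 / n - 2 / N := by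
  intro N hN
  induction N, hN using Nat.le_induction with
  | base => simp
  | succ N hN ih =>
      rw [Finset.sum_Ico_succ_top hN]
      have hN1 : (1 : ℝ) ≤ (N : ℝ) := by exact_mod_cast le_trans hn hN
      have key : (1 : ℝ) / (N : ℝ) ^ 2 ≤ 2 / N - 2 / ((N : ℝ) + 1) := by
        rw [div_sub_div _ _ (by linarith) (by linarith), div_le_div_iff₀ (by positivity) (by positivity)]
        ring_nf
        nlinarith
      push_cast
      linarith

lemma main_bound (lam : ℂ) (hlam : ‖lam‖ = 1) (κ : ℂ) (hκ : κ.re = 0)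
    (C r : ℝ) (hC : 0 < C) (hr : 0 < r)
    (hgeom : ∀ ℓ m N : ℕ, 0 < ℓ → 0 < m → m < N →
      ‖∑ j ∈ Finset.Icc m N, lam ^ (ℓ * j)‖ < C * (ℓ : ℝ) ^ r)
    (n ℓ N : ℕ) (hn : 0 < n) (hℓ : 0 < ℓ) (hN : n ≤ N) :
    ‖∑ k ∈ Finset.Icc n N,
        Complex.exp (κ * ℓ * Real.log k) / k * lam ^ (k * ℓ)‖
      ≤ (C + 1) * (4 * ‖κ‖ + 3) * (ℓ : ℝ) ^ (r + 1) / n := by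
  set f : ℕ → ℂ := fun k => Complex.exp (κ * ℓ * Real.log k) / k with hf
  set a : ℕ → ℂ := fun k => lam ^ (k * ℓ) with ha
  have hℓ1 : (1 : ℝ) ≤ (ℓ : ℝ) := by exact_mod_cast hℓ
  have hℓr : (1 : ℝ) ≤ (ℓ : ℝ) ^ r := Real.one_le_rpow hℓ1 hr.le
  have hℓr0 : (0 : ℝ) < (ℓ : ℝ) ^ r := lt_of_lt_of_le one_pos hℓr
  -- |exp(κ ℓ log k)| = 1
  have hexp1 : ∀ x : ℝ, ‖Complex.exp (κ * ℓ * (x : ℂ))‖ = 1 := by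
    intro x
    rw [Complex.norm_exp]
    have : (κ * ℓ * (x : ℂ)).re = 0 := by
      simp [Complex.mul_re, Complex.mul_im, hκ]
    rw [this, Real.exp_zero]
  -- |f k| = 1/k
  have habs_f : ∀ k : ℕ, 0 < k → ‖f k‖ = 1 / (k : ℝ) := by
    intro k hk
    simp only [hf, norm_div, hexp1, Complex.norm_natCast]
  -- purely imaginary rewrite of exponent
  obtain ⟨c, hc, hcle⟩ : ∃ c : ℝ, κ = (c : ℂ) * I ∧ |c| ≤ ‖κ‖ :=
    ⟨κ.im, by apply Complex.ext <;> simp [hκ], Complex.abs_im_le_norm κ⟩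
  have hexp_eq : ∀ k : ℕ, Complex.exp (κ * ℓ * (Real.log k : ℂ))
      = Complex.exp (((c * ℓ * Real.log k : ℝ) : ℂ) * I) := by
    intro k
    congr 1
    rw [hc]
    push_cast
    ring
  -- bound on A k
  have hA : ∀ k, n ≤ k → ‖∑ j ∈ Icc n k, a j‖ ≤ C * (ℓ : ℝ) ^ r + 1 := by
    intro k hk
    rcases eq_or_lt_of_le hk with rfl | hlt
    · have : (∑ j ∈ Icc n n, a j) = a n := by simp
      rw [this]
      have : ‖a n‖ = 1 := by
        simp [ha, norm_pow, hlam]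
      rw [this]
      nlinarith
    · have heq : (∑ j ∈ Icc n k, a j) = ∑ j ∈ Icc n k, lam ^ (ℓ * j) :=
        Finset.sum_congr rfl fun j _ => by rw [ha]; ring_nf
      rw [heq]
      exact le_of_lt (lt_of_lt_of_le (hgeom ℓ n k hℓ hn hlt) (by linarith))
  -- bound on f k - f (k+1)
  have hdiff : ∀ k : ℕ, 0 < k → ‖f k - f (k + 1)‖
      ≤ (2 * ‖κ‖ * ℓ + 1) / (k : ℝ) ^ 2 := by
    intro k hk
    have hk0 : ((k : ℂ)) ≠ 0 := Nat.cast_ne_zero.mpr hk.ne'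
    have hk10 : ((k : ℂ) + 1) ≠ 0 := by
      have : ((k + 1 : ℕ) : ℂ) ≠ 0 := Nat.cast_ne_zero.mpr (Nat.succ_ne_zero k)
      push_cast at this; exact this
    have hr1 : (0:ℝ) < (k:ℝ) := by exact_mod_cast hk
    have hnn : 0 ≤ Real.log ((k:ℝ) + 1) - Real.log k := by
      have := Real.log_le_log (by positivity) (by linarith : (k:ℝ) ≤ (k:ℝ)+1)
      linarith
    have hlog2 : Real.log ((k : ℝ) + 1) - Real.log k ≤ 1 / k := by
      rw [← Real.log_div (by linarith) (by linarith)]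
      have := Real.log_le_sub_one_of_pos (show (0:ℝ) < ((k:ℝ)+1)/k by positivity)
      have heq2 : ((k:ℝ)+1)/k - 1 = 1/k := by field_simp; ring
      linarith [heq2 ▸ this]
    set e1 := Complex.exp (κ * ℓ * (Real.log k : ℂ)) with he1
    set e2 := Complex.exp (κ * ℓ * (Real.log (k + 1 : ℕ) : ℂ)) with he2
    have key : f k - f (k + 1)
        = e1 * (1 / ((k : ℂ) * ((k : ℂ) + 1))) + (e1 - e2) * (1 / ((k : ℂ) + 1)) := by
      simp only [hf, he1, he2]
      push_cast
      field_simp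
      ring
    rw [key]
    have habs1 : ‖e1 * (1 / ((k : ℂ) * ((k : ℂ) + 1)))‖
        = 1 / ((k : ℝ) * ((k : ℝ) + 1)) := by
      rw [norm_mul, he1, hexp1, one_mul, norm_div, norm_one, norm_mul]
      norm_cast
    have habs2 : ‖e1 - e2‖ ≤ 2 * ‖κ‖ * ℓ / k := by
      rw [he1, he2, hexp_eq k, hexp_eq (k + 1)]
      refine le_trans (exp_I_dist _ _) ?_
      push_cast
      have habs : |c * ℓ * Real.log k - c * ℓ * Real.log ((k:ℝ) + 1)|
          = |c| * ℓ * (Real.log ((k : ℝ) + 1) - Real.log k) := by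
        rw [show c * ℓ * Real.log k - c * ℓ * Real.log ((k:ℝ) + 1)
            = -(c * (Real.log ((k:ℝ) + 1) - Real.log k) * ℓ) by ring,
          abs_neg, abs_mul, abs_mul, _root_.abs_of_nonneg hnn,
          _root_.abs_of_nonneg (by positivity : (0:ℝ) ≤ (ℓ:ℝ))]
        ring
      rw [habs]
      have h1 : |c| * (Real.log ((k : ℝ) + 1) - Real.log k) ≤ ‖κ‖ * (1 / k) :=
        mul_le_mul hcle hlog2 hnn (norm_nonneg κ)
      calc 2 * (|c| * ↑ℓ * (Real.log ((k : ℝ) + 1) - Real.log k))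
          = 2 * ↑ℓ * (|c| * (Real.log ((k : ℝ) + 1) - Real.log k)) := by ring
        _ ≤ 2 * ↑ℓ * (‖κ‖ * (1 / k)) :=
            mul_le_mul_of_nonneg_left h1 (by positivity)
        _ = 2 * ‖κ‖ * ℓ / k := by ring
    have habs3 : ‖(e1 - e2) * (1 / ((k : ℂ) + 1))‖
        ≤ (2 * ‖κ‖ * ℓ / k) * (1 / ((k:ℝ) + 1)) := by
      rw [norm_mul]
      apply mul_le_mul habs2 _ (by positivity) (by positivity)
      rw [norm_div, norm_one]
      rw [← Complex.ofReal_natCast, ← Complex.ofReal_one, ← Complex.ofReal_add,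
        Complex.norm_real, Real.norm_eq_abs, _root_.abs_of_pos (by linarith)]
    refine le_trans (norm_add_le _ _) ?_
    rw [habs1]
    have hK : 0 ≤ ‖κ‖ := norm_nonneg κ
    have e : 1 / ((k:ℝ) * ((k:ℝ) + 1)) + 2 * ‖κ‖ * ℓ / k * (1 / ((k:ℝ) + 1))
        = (2 * ‖κ‖ * ℓ + 1) / ((k:ℝ) * ((k:ℝ) + 1)) := by
      field_simp
      ring
    have e2' : (2 * ‖κ‖ * ℓ + 1) / ((k:ℝ) * ((k:ℝ) + 1))
        ≤ (2 * ‖κ‖ * ℓ + 1) / (k : ℝ) ^ 2 := by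
      apply div_le_div_of_nonneg_left (by positivity) (by positivity)
      nlinarith
    linarith [habs3]
  -- combine via Abel summation
  have hgoal : (∑ k ∈ Finset.Icc n N,
      Complex.exp (κ * ℓ * Real.log k) / k * lam ^ (k * ℓ)) = ∑ k ∈ Icc n N, f k * a k := rfl
  rw [hgoal, abel_sum f a n N hN]
  have hK : 0 ≤ ‖κ‖ := norm_nonneg κ
  have hn' : (0:ℝ) < n := by exact_mod_cast hn
  have hNn : (n:ℝ) ≤ N := by exact_mod_cast hN
  have hN' : (0:ℝ) < N := lt_of_lt_of_le hn' hNn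
  have hB : (0:ℝ) < C * (ℓ:ℝ) ^ r + 1 := by positivity
  have h1 : ‖f N * ∑ j ∈ Icc n N, a j‖ ≤ (C * (ℓ:ℝ) ^ r + 1) / n := by
    rw [norm_mul, habs_f N (lt_of_lt_of_le hn hN)]
    calc 1 / (N:ℝ) * ‖∑ j ∈ Icc n N, a j‖
        ≤ 1 / (n:ℝ) * (C * (ℓ:ℝ) ^ r + 1) := by
          apply mul_le_mul (by
            apply one_div_le_one_div_of_le hn' hNn) (hA N hN) (norm_nonneg _)
            (by positivity)
      _ = (C * (ℓ:ℝ) ^ r + 1) / n := by ring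
  have h2 : ‖∑ k ∈ Ico n N, (f k - f (k + 1)) * (∑ j ∈ Icc n k, a j)‖
      ≤ (2 * ‖κ‖ * ℓ + 1) * (C * (ℓ:ℝ) ^ r + 1) * (2 / n) := by
    refine le_trans (norm_sum_le _ _) ?_
    have hterm : ∀ k ∈ Ico n N, ‖(f k - f (k + 1)) * (∑ j ∈ Icc n k, a j)‖
        ≤ ((2 * ‖κ‖ * ℓ + 1) * (C * (ℓ:ℝ) ^ r + 1)) * ((1:ℝ) / (k:ℝ) ^ 2) := by
      intro k hkmem
      obtain ⟨hk1, _⟩ := Finset.mem_Ico.mp hkmem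
      have hkpos : 0 < k := lt_of_lt_of_le hn hk1
      rw [norm_mul]
      calc ‖f k - f (k + 1)‖ * ‖∑ j ∈ Icc n k, a j‖
          ≤ ((2 * ‖κ‖ * ℓ + 1) / (k:ℝ) ^ 2) * (C * (ℓ:ℝ) ^ r + 1) := by
            apply mul_le_mul (hdiff k hkpos) (hA k hk1) (norm_nonneg _) (by positivity)
        _ = ((2 * ‖κ‖ * ℓ + 1) * (C * (ℓ:ℝ) ^ r + 1)) * ((1:ℝ) / (k:ℝ) ^ 2) := by
            ring
    refine le_trans (Finset.sum_le_sum hterm) ?_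
    rw [← Finset.mul_sum]
    have hsq := sum_inv_sq n hn N hN
    have hsq2 : ∑ k ∈ Ico n N, (1:ℝ) / (k:ℝ) ^ 2 ≤ 2 / n := by
      have : (0:ℝ) ≤ 2 / N := by positivity
      linarith
    apply mul_le_mul_of_nonneg_left hsq2 (by positivity)
  have hpow : ((ℓ:ℝ)) ^ (r + 1) = (ℓ:ℝ) ^ r * ℓ := by
    rw [Real.rpow_add_one (by positivity : (ℓ:ℝ) ≠ 0)]
  calc ‖f N * (∑ j ∈ Icc n N, a j)
        + ∑ k ∈ Ico n N, (f k - f (k + 1)) * (∑ j ∈ Icc n k, a j)‖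
      ≤ ‖f N * (∑ j ∈ Icc n N, a j)‖
        + ‖∑ k ∈ Ico n N, (f k - f (k + 1)) * (∑ j ∈ Icc n k, a j)‖ :=
        norm_add_le _ _
    _ ≤ (C * (ℓ:ℝ) ^ r + 1) / n + (2 * ‖κ‖ * ℓ + 1) * (C * (ℓ:ℝ) ^ r + 1) * (2 / n) := by
        linarith
    _ = (C * (ℓ:ℝ) ^ r + 1) * (4 * ‖κ‖ * ℓ + 3) / n := by ring
    _ ≤ ((C + 1) * (ℓ:ℝ) ^ r) * ((4 * ‖κ‖ + 3) * ℓ) / n := by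
        gcongr
        · nlinarith
        · linarith
    _ = (C + 1) * (4 * ‖κ‖ + 3) * (ℓ : ℝ) ^ (r + 1) / n := by
        rw [hpow]; ring


theorem stmt_1 (lam : ℂ) (hlam : ‖lam‖ = 1) (κ : ℂ) (hκ : κ.re = 0)
    (C r : ℝ) (hC : 0 < C) (hr : 0 < r)
    (hgeom : ∀ ℓ m N : ℕ, 0 < ℓ → 0 < m → m < N →
      ‖∑ j ∈ Finset.Icc m N, lam ^ (ℓ * j)‖ < C * (ℓ : ℝ) ^ r) :
    ∃ Ct > 0, ∀ n ℓ : ℕ, 0 < n → 0 < ℓ →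
      ∃ S : ℂ,
        Tendsto (fun N : ℕ =>
            ∑ k ∈ Finset.Icc n N,
              Complex.exp (κ * ℓ * Real.log k) / k * lam ^ (k * ℓ))
          atTop (nhds S) ∧
        ‖S‖ < Ct * (ℓ : ℝ) ^ (r + 1) / n := by
  have hK : (0:ℝ) ≤ ‖κ‖ := norm_nonneg κ
  refine ⟨(C + 1) * (4 * ‖κ‖ + 3) + 1, by nlinarith, ?_⟩
  intro n ℓ hn hℓ
  have hℓ1 : (1:ℝ) ≤ (ℓ:ℝ) := by exact_mod_cast hℓ
  have hℓr1 : (1:ℝ) ≤ (ℓ:ℝ) ^ (r + 1) := Real.one_le_rpow hℓ1 (by linarith)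
  set D : ℝ := (C + 1) * (4 * ‖κ‖ + 3) * (ℓ : ℝ) ^ (r + 1) with hD
  have hD0 : 0 < D := by
    rw [hD]
    exact mul_pos (mul_pos (by linarith) (by linarith)) (lt_of_lt_of_le one_pos hℓr1)
  set g : ℕ → ℂ := fun k => Complex.exp (κ * ℓ * Real.log k) / k * lam ^ (k * ℓ) with hg
  set P : ℕ → ℂ := fun N => ∑ k ∈ Finset.Icc n N, g k with hPdef
  obtain ⟨p, rfl⟩ : ∃ p, n = p + 1 := ⟨n - 1, (Nat.succ_pred_eq_of_pos hn).symm⟩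
  have hdiffP : ∀ N M : ℕ, p + 1 ≤ N → N ≤ M →
      P M - P N = ∑ k ∈ Finset.Icc (N + 1) M, g k := by
    intro N M hN hM
    have h1 : P N = ∑ k ∈ Finset.Ioc p N, g k := by
      rw [hPdef]; simp [← Finset.Icc_add_one_left_eq_Ioc]
    have h2 : P M = ∑ k ∈ Finset.Ioc p M, g k := by
      rw [hPdef]; simp [← Finset.Icc_add_one_left_eq_Ioc]
    have h3 := Finset.sum_Ioc_consecutive g (le_trans (Nat.le_succ p) hN) hM
    have h4 : Finset.Ioc N M = Finset.Icc (N + 1) M := by rw [Finset.Icc_add_one_left_eq_Ioc]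
    rw [h1, h2, ← h3, h4]
    ring
  have hbound : ∀ N M : ℕ, p + 1 ≤ N → N + 1 ≤ M →
      ‖∑ k ∈ Finset.Icc (N + 1) M, g k‖ ≤ D / (N + 1) := by
    intro N M hN hM
    have := main_bound lam hlam κ hκ C r hC hr hgeom (N + 1) ℓ M (Nat.succ_pos N) hℓ hM
    rw [hg, hD]
    push_cast at this ⊢
    exact this
  have hcauchy : CauchySeq P := by
    rw [Metric.cauchySeq_iff']
    intro ε hε
    obtain ⟨N₁, hN₁⟩ := exists_nat_gt (D / ε)
    refine ⟨max (p + 1) N₁, ?_⟩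
    intro M hM
    have hN0 : p + 1 ≤ max (p + 1) N₁ := le_max_left _ _
    rw [Complex.dist_eq, hdiffP _ _ hN0 hM]
    rcases le_or_gt (max (p + 1) N₁ + 1) M with hle | hlt
    · refine lt_of_le_of_lt (hbound _ _ hN0 hle) ?_
      rw [div_lt_iff₀ (by positivity)]
      have h1 : (N₁ : ℝ) ≤ (max (p + 1) N₁ : ℕ) := by exact_mod_cast le_max_right _ _
      have h2 : D / ε < N₁ := hN₁
      have h3 : D < ε * N₁ := by
        rw [div_lt_iff₀ hε] at h2; linarith
      nlinarith
    · have hMeq : M = max (p + 1) N₁ := le_antisymm (Nat.lt_succ_iff.mp hlt) hM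
      rw [hMeq]
      simp [Finset.Icc_eq_empty_of_lt (Nat.lt_succ_self _), hε]
  obtain ⟨S, hS⟩ := cauchySeq_tendsto_of_complete hcauchy
  refine ⟨S, hS, ?_⟩
  have hb : ‖S‖ ≤ D / (p + 1) := by
    have htd : Tendsto (fun N => ‖P N‖) atTop (nhds (‖S‖)) := by
      exact hS.norm
    refine le_of_tendsto htd ?_
    filter_upwards [eventually_ge_atTop (p + 1)] with N hN
    have := main_bound lam hlam κ hκ C r hC hr hgeom (p + 1) ℓ N hn hℓ hN
    rw [show (((p + 1 : ℕ)) : ℝ) = (p : ℝ) + 1 from by push_cast; ring] at this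
    exact this
  have hfin : D / ((p:ℝ) + 1) < ((C + 1) * (4 * ‖κ‖ + 3) + 1) * (ℓ:ℝ) ^ (r + 1) / ((p:ℝ) + 1) := by
    rw [div_lt_div_iff₀ (by positivity) (by positivity)]
    have hpow : (0:ℝ) < (ℓ:ℝ) ^ (r + 1) := lt_of_lt_of_le one_pos hℓr1
    nlinarith
  push_cast at hb ⊢
  linarith
end

section
/- ∫_0^1 Φ(x) dx = 1 − π²/4, where Φ(x) = (x² − u(x)²)/(x² u(x)²) and u(x) = (2/π) tan(πx/2). -/
open Real

private lemma aux_cot_bounds {t : ℝ} (h0 : 0 < t) (h1 : t < π / 2) :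
    1 / t - t / 2 ≤ 1 / Real.tan t ∧ 1 / Real.tan t ≤ 1 / t := by
  have hπ := Real.pi_pos
  have hs : 0 < Real.sin t := Real.sin_pos_of_pos_of_lt_pi h0 (by linarith)
  have hc : 0 < Real.cos t := Real.cos_pos_of_mem_Ioo ⟨by linarith, h1⟩
  constructor
  · have hct : 1 / Real.tan t = Real.cos t / Real.sin t := by
      rw [Real.tan_eq_sin_div_cos, one_div_div]
    rw [hct]
    rcases le_or_gt (1 - t ^ 2 / 2) 0 with h | h
    · have h2 : 1 / t - t / 2 = (1 - t ^ 2 / 2) / t := by field_simp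
      have h3 : (1 - t ^ 2 / 2) / t ≤ 0 := div_nonpos_of_nonpos_of_nonneg h h0.le
      have h4 : 0 ≤ Real.cos t / Real.sin t := (div_pos hc hs).le
      linarith
    · have hcos : 1 - t ^ 2 / 2 ≤ Real.cos t := Real.one_sub_sq_div_two_le_cos
      have hsin : Real.sin t ≤ t := (Real.sin_lt h0).le
      have h2 : 1 / t - t / 2 = (1 - t ^ 2 / 2) / t := by field_simp
      rw [h2, div_le_div_iff₀ h0 hs]
      nlinarith
  · exact one_div_le_one_div_of_le h0 (Real.lt_tan h0 h1).le

private lemma aux_inv_tan_bounds {x : ℝ} (hx0 : 0 < x) (hx1 : x < 1) :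
    2 / (π * x) - π * x / 4 ≤ 1 / Real.tan (π * x / 2) ∧
      1 / Real.tan (π * x / 2) ≤ 2 / (π * x) := by
  have hπ := Real.pi_pos
  have h0 : 0 < π * x / 2 := by positivity
  have h1 : π * x / 2 < π / 2 := by nlinarith
  obtain ⟨hl, hu⟩ := aux_cot_bounds h0 h1
  have hπ' : π ≠ 0 := hπ.ne'
  have hx' : x ≠ 0 := hx0.ne'
  have e1 : 1 / (π * x / 2) = 2 / (π * x) := by
    field_simp
  have e2 : (π * x / 2) / 2 = π * x / 4 := by ring
  exact ⟨by rw [e1, e2] at hl; exact hl, by rw [e1] at hu; exact hu⟩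

private lemma aux_integrand_bounds {x : ℝ} (hx0 : 0 < x) (hx1 : x < 1) :
    1 / x ^ 2 - π ^ 2 / 4 ≤ 1 / ((2 / π * Real.tan (π * x / 2)) ^ 2) ∧
      1 / ((2 / π * Real.tan (π * x / 2)) ^ 2) ≤ 1 / x ^ 2 := by
  have hπ := Real.pi_pos
  have h0 : 0 < π * x / 2 := by positivity
  have h1 : π * x / 2 < π / 2 := by nlinarith
  have htan : 0 < Real.tan (π * x / 2) := Real.tan_pos_of_pos_of_lt_pi_div_two h0 h1
  obtain ⟨hl, hu⟩ := aux_inv_tan_bounds hx0 hx1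
  set c : ℝ := 1 / Real.tan (π * x / 2) with hc
  have hc0 : 0 < c := by positivity
  have hrw : 1 / ((2 / π * Real.tan (π * x / 2)) ^ 2) = π ^ 2 / 4 * c ^ 2 := by
    rw [hc]; field_simp; ring
  rw [hrw]
  constructor
  · rcases le_or_gt 0 (2 / (π * x) - π * x / 4) with hL | hL
    · have hsq : (2 / (π * x) - π * x / 4) * (2 / (π * x) - π * x / 4) ≤ c * c :=
        mul_self_le_mul_self hL hl
      have hkey : π ^ 2 / 4 * ((2 / (π * x) - π * x / 4) * (2 / (π * x) - π * x / 4)) =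
          1 / x ^ 2 - π ^ 2 / 4 + π ^ 4 * x ^ 2 / 64 := by
        field_simp; ring
      nlinarith [sq_nonneg x, sq_nonneg (π ^ 2 * x)]
    · have hL' : 2 / (π * x) < π * x / 4 := by linarith
      rw [div_lt_div_iff₀ (by positivity) (by norm_num : (0:ℝ) < 4)] at hL'
      have h8 : 8 < π ^ 2 * x ^ 2 := by nlinarith
      have hx2 : 1 / x ^ 2 < π ^ 2 / 8 := by
        rw [div_lt_div_iff₀ (by positivity) (by norm_num : (0:ℝ) < 8)]
        nlinarith
      nlinarith [sq_nonneg c]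
  · have hsq : c * c ≤ 2 / (π * x) * (2 / (π * x)) := mul_self_le_mul_self hc0.le hu
    have hkey : π ^ 2 / 4 * (2 / (π * x) * (2 / (π * x))) = 1 / x ^ 2 := by
      field_simp; ring
    nlinarith

private lemma aux_hasDerivAt {x : ℝ} (hx0 : 0 < x) (hx1 : x < 1) :
    HasDerivAt (fun x : ℝ => -(π / 2) / Real.tan (π * x / 2) - π ^ 2 / 4 * x + 1 / x)
      (1 / ((2 / π * Real.tan (π * x / 2)) ^ 2) - 1 / x ^ 2) x := by
  have hπ := Real.pi_pos
  have h0 : 0 < π * x / 2 := by positivity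
  have h1 : π * x / 2 < π / 2 := by nlinarith
  have hs : 0 < Real.sin (π * x / 2) := Real.sin_pos_of_pos_of_lt_pi h0 (by linarith)
  have hc : 0 < Real.cos (π * x / 2) := Real.cos_pos_of_mem_Ioo ⟨by linarith, h1⟩
  have htan : 0 < Real.tan (π * x / 2) := Real.tan_pos_of_pos_of_lt_pi_div_two h0 h1
  have hin : HasDerivAt (fun x : ℝ => π * x / 2) (π / 2) x := by
    simpa using ((hasDerivAt_id x).const_mul π).div_const 2
  have hT : HasDerivAt (fun x : ℝ => Real.tan (π * x / 2))
      (1 / Real.cos (π * x / 2) ^ 2 * (π / 2)) x :=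
    HasDerivAt.comp (h₂ := Real.tan) x (Real.hasDerivAt_tan hc.ne') hin
  have hA : HasDerivAt (fun x : ℝ => -(π / 2) / Real.tan (π * x / 2))
      ((0 * Real.tan (π * x / 2) - -(π / 2) * (1 / Real.cos (π * x / 2) ^ 2 * (π / 2))) /
        Real.tan (π * x / 2) ^ 2) x :=
    (hasDerivAt_const x (-(π / 2))).div hT htan.ne'
  have hB : HasDerivAt (fun x : ℝ => π ^ 2 / 4 * x) (π ^ 2 / 4) x := by
    simpa using (hasDerivAt_id x).const_mul (π ^ 2 / 4)
  have hC : HasDerivAt (fun x : ℝ => 1 / x) (-(1 / x ^ 2)) x := by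
    simpa [one_div] using hasDerivAt_inv hx0.ne'
  have hsum := (hA.sub hB).add hC
  refine hsum.congr_deriv (Eq.symm ?_)
  have hpy := Real.sin_sq_add_cos_sq (π * x / 2)
  rw [Real.tan_eq_sin_div_cos]
  field_simp
  linear_combination (4 * π ^ 2 * x ^ 2) * hpy

open MeasureTheory Filter Topology Set in
set_option maxHeartbeats 2000000 in
theorem stmt_4 :
    ∫ x in (0:ℝ)..1, (1 / ((2 / π * Real.tan (π * x / 2)) ^ 2) - 1 / x ^ 2) =
      1 - π ^ 2 / 4 := by
  have hπ := Real.pi_pos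
  set g : ℝ → ℝ := fun x => 1 / ((2 / π * Real.tan (π * x / 2)) ^ 2) - 1 / x ^ 2 with hg
  set F : ℝ → ℝ := fun x => -(π / 2) / Real.tan (π * x / 2) - π ^ 2 / 4 * x + 1 / x with hF
  have htanm : Measurable Real.tan := by
    have : Real.tan = fun x => Real.sin x / Real.cos x := funext Real.tan_eq_sin_div_cos
    rw [this]; exact Real.measurable_sin.div Real.measurable_cos
  have hmeas : Measurable g := by
    apply Measurable.sub
    · exact measurable_const.div
        (((htanm.comp (measurable_id.const_mul π |>.div_const 2)).const_mul (2 / π)).pow_const 2)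
    · exact measurable_const.div (measurable_id.pow_const 2)
  have hint : IntervalIntegrable g volume 0 1 := by
    rw [intervalIntegrable_iff]
    rw [Set.uIoc_of_le (by norm_num : (0:ℝ) ≤ 1)]
    refine Measure.integrableOn_of_bounded (M := π ^ 2 / 4) ?_ hmeas.aestronglyMeasurable ?_
    · simp [Real.volume_Ioc]
    · have hne : ∀ᵐ x : ℝ ∂(volume.restrict (Ioc (0:ℝ) 1)), x ≠ 1 := by
        apply ae_restrict_of_ae
        rw [MeasureTheory.ae_iff]
        simpa using Real.volume_singleton
      have hmem := ae_restrict_mem (μ := volume) (measurableSet_Ioc : MeasurableSet (Ioc (0:ℝ) 1))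
      filter_upwards [hne, hmem] with x hx1 hx
      obtain ⟨hl, hu⟩ := aux_integrand_bounds hx.1 (lt_of_le_of_ne hx.2 hx1)
      rw [Real.norm_eq_abs, abs_le]
      constructor <;> simp only [hg] <;> [linarith; linarith]
  have hderiv : ∀ x ∈ Ioo (0:ℝ) 1, HasDerivAt F (g x) x := fun x hx =>
    aux_hasDerivAt hx.1 hx.2
  have hb : Tendsto F (𝓝[<] (1:ℝ)) (𝓝 (1 - π ^ 2 / 4)) := by
    have h1 : Tendsto (fun x : ℝ => π * x / 2) (𝓝[<] 1) (𝓝[<] (π / 2)) := by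
      apply tendsto_nhdsWithin_of_tendsto_nhds_of_eventually_within
      · have : Continuous (fun x : ℝ => π * x / 2) := by continuity
        simpa using this.tendsto' 1 (π / 2) (by ring) |>.mono_left nhdsWithin_le_nhds
      · filter_upwards [self_mem_nhdsWithin] with x (hx : x < 1)
        show π * x / 2 < π / 2
        nlinarith
    have h2 : Tendsto (fun x : ℝ => Real.tan (π * x / 2)) (𝓝[<] 1) atTop :=
      Real.tendsto_tan_pi_div_two.comp h1
    have h3 : Tendsto (fun x : ℝ => -(π / 2) / Real.tan (π * x / 2)) (𝓝[<] 1) (𝓝 0) := by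
      have := h2.inv_tendsto_atTop
      have h4 : Tendsto (fun x : ℝ => -(π / 2) * (Real.tan (π * x / 2))⁻¹) (𝓝[<] 1)
          (𝓝 (-(π / 2) * 0)) := this.const_mul _
      simpa [div_eq_mul_inv] using h4
    have h5 : Tendsto (fun x : ℝ => -(π ^ 2 / 4) * x + 1 / x) (𝓝[<] 1)
        (𝓝 (-(π ^ 2 / 4) * 1 + 1 / 1)) := by
      apply Tendsto.mono_left _ nhdsWithin_le_nhds
      exact ((continuous_const.mul continuous_id).tendsto 1).add
        (tendsto_const_nhds.div (continuous_id.tendsto 1) one_ne_zero)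
    have hsum := h3.add h5
    have hv : ((0:ℝ) + (-(π ^ 2 / 4) * 1 + 1 / 1)) = 1 - π ^ 2 / 4 := by ring
    rw [hv] at hsum
    exact hsum.congr (fun x => by simp only [hF]; ring)
  have ha : Tendsto F (𝓝[>] (0:ℝ)) (𝓝 0) := by
    have hlow : Tendsto (fun x : ℝ => -(π ^ 2 / 4) * x) (𝓝[>] (0:ℝ)) (𝓝 0) := by
      apply Tendsto.mono_left _ nhdsWithin_le_nhds
      have hco : Continuous fun x : ℝ => -(π ^ 2 / 4) * x := by continuity
      exact hco.tendsto' 0 0 (by norm_num)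
    have hhigh : Tendsto (fun x : ℝ => -(π ^ 2 / 8) * x) (𝓝[>] (0:ℝ)) (𝓝 0) := by
      apply Tendsto.mono_left _ nhdsWithin_le_nhds
      have hco : Continuous fun x : ℝ => -(π ^ 2 / 8) * x := by continuity
      exact hco.tendsto' 0 0 (by norm_num)
    apply tendsto_of_tendsto_of_tendsto_of_le_of_le' hlow hhigh
    · filter_upwards [Ioo_mem_nhdsGT_of_mem (by norm_num : (0:ℝ) ∈ Ico (0:ℝ) 1)]
        with x hx
      obtain ⟨hl, hu⟩ := aux_inv_tan_bounds hx.1 hx.2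
      have hπ' : π ≠ 0 := hπ.ne'
      have hx' : x ≠ 0 := hx.1.ne'
      have e : (π / 2) * (2 / (π * x)) = 1 / x := by
        field_simp
      simp only [hF]
      have hc : -(π / 2) / Real.tan (π * x / 2) = -(π / 2 * (1 / Real.tan (π * x / 2))) := by
        rw [mul_one_div, neg_div]
      have h6 : π / 2 * (1 / Real.tan (π * x / 2)) ≤ π / 2 * (2 / (π * x)) :=
        mul_le_mul_of_nonneg_left hu (by positivity)
      rw [e] at h6
      rw [hc]
      linarith
    · filter_upwards [Ioo_mem_nhdsGT_of_mem (by norm_num : (0:ℝ) ∈ Ico (0:ℝ) 1)]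
        with x hx
      obtain ⟨hl, hu⟩ := aux_inv_tan_bounds hx.1 hx.2
      have hπ' : π ≠ 0 := hπ.ne'
      have hx' : x ≠ 0 := hx.1.ne'
      have e : (π / 2) * (2 / (π * x) - π * x / 4) = 1 / x - π ^ 2 * x / 8 := by
        field_simp; ring
      simp only [hF]
      have hc : -(π / 2) / Real.tan (π * x / 2) = -(π / 2 * (1 / Real.tan (π * x / 2))) := by
        rw [mul_one_div, neg_div]
      have h6 : π / 2 * (2 / (π * x) - π * x / 4) ≤ π / 2 * (1 / Real.tan (π * x / 2)) :=
        mul_le_mul_of_nonneg_left hl (by positivity)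
      rw [e] at h6
      rw [hc]
      linarith
  have := intervalIntegral.integral_eq_sub_of_hasDerivAt_of_tendsto (by norm_num : (0:ℝ) < 1)
    hderiv hint ha hb
  rw [this]
  ring
end

section
/- Let f(z) = z + z² + az³ + O(z⁴) be a polynomial and c a simple critical point of f lying in the parabolic basin, whose forward orbit avoids all critical points of f. Then the incoming Fatou coordinate φ of f satisfies φ''(c) ≠ 0. More generally, φ''(c) = 0 if and only if c is a multiple critical point of f or the forward orbit of c meets another critical point of f. -/
open Filter

open Polynomial in

private lemma aux_bound (P : Polynomial ℂ) (a : ℂ)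
    (h0 : P.coeff 0 = 0) (h1 : P.coeff 1 = 1) (h2 : P.coeff 2 = 1) (h3 : P.coeff 3 = a)
    (f : ℂ → ℂ) (hfP : f = fun z => P.eval z) :
    ∃ δ : ℝ, 0 < δ ∧ ∃ C : ℝ, 0 ≤ C ∧ ∀ z : ℂ, z ≠ 0 → ‖z‖ ≤ δ →
      f z ≠ 0 ∧ ‖deriv f z * z^2 * ((f z)^2)⁻¹ - 1‖ ≤ C * ‖z‖^2 := by
  have hderivf : deriv f = fun z => P.derivative.eval z := by
    funext z; rw [hfP]; exact Polynomial.deriv (p := P)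
  -- factor P = X + X^2 * T
  have hT : (X:ℂ[X])^2 ∣ (P - X) := by
    rw [Polynomial.X_pow_dvd_iff]
    intro d hd
    interval_cases d <;> simp [h0, h1]
  obtain ⟨T, hTeq⟩ := hT
  -- factor derivative P * X^2 - P^2 = X^4 * M
  have hM : (X:ℂ[X])^4 ∣ (P.derivative * X^2 - P^2) := by
    rw [Polynomial.X_pow_dvd_iff]
    intro d hd
    have hp2 : ∀ n, (P^2).coeff n = ∑ k ∈ Finset.range (n+1), P.coeff k * P.coeff (n - k) := by
      intro n
      rw [sq, Polynomial.coeff_mul, Finset.Nat.sum_antidiagonal_eq_sum_range_succ_mk]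
    interval_cases d <;>
      simp [Polynomial.coeff_sub, Polynomial.coeff_mul_X_pow', hp2, Finset.sum_range_succ,
        Polynomial.coeff_derivative, h0, h1, h2, h3]
  obtain ⟨M, hMeq⟩ := hM
  have hfz : ∀ z : ℂ, f z = z * (1 + z * T.eval z) := by
    intro z
    have := congrArg (Polynomial.eval z) hTeq
    simp only [Polynomial.eval_sub, Polynomial.eval_mul, Polynomial.eval_pow,
      Polynomial.eval_X] at this
    rw [hfP]
    simp only
    linear_combination this
  have hnum : ∀ z : ℂ, deriv f z * z^2 - (f z)^2 = z^4 * M.eval z := by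
    intro z
    have := congrArg (Polynomial.eval z) hMeq
    simp only [Polynomial.eval_sub, Polynomial.eval_mul, Polynomial.eval_pow,
      Polynomial.eval_X] at this
    rw [hderivf, hfP]
    simp only
    linear_combination this
  -- choose δ with ‖z * T z‖ ≤ 1/2 on the ball
  have hcont : ContinuousAt (fun z : ℂ => z * T.eval z) 0 :=
    (continuous_id.mul T.continuous).continuousAt
  have h12 : (0:ℝ) < 1/2 := by norm_num
  obtain ⟨δ₀, hδ₀, hball⟩ := Metric.continuousAt_iff.1 hcont (1/2) h12
  set δ := δ₀ / 2 with hδdef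
  have hδpos : 0 < δ := by positivity
  have hsmall : ∀ z : ℂ, ‖z‖ ≤ δ → ‖z * T.eval z‖ ≤ 1/2 := by
    intro z hz
    have : dist z 0 < δ₀ := by
      rw [dist_zero_right]; linarith
    have := hball this
    rw [dist_eq_norm] at this
    simp only [zero_mul, sub_zero] at this
    linarith
  -- bound for M on the ball
  obtain ⟨B, hB⟩ := (isCompact_closedBall (0:ℂ) δ).exists_bound_of_continuousOn
    (M.continuous.continuousOn (s := Metric.closedBall 0 δ))
  have hB0 : 0 ≤ B := le_trans (norm_nonneg _) (hB 0 (Metric.mem_closedBall_self hδpos.le))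
  refine ⟨δ, hδpos, 4 * B, by positivity, ?_⟩
  intro z hz0 hzδ
  have hzT := hsmall z hzδ
  have hden : ‖1 + z * T.eval z‖ ≥ 1/2 := by
    have := norm_sub_norm_le (1 + z * T.eval z) (z * T.eval z)
    simp only [add_sub_cancel_right] at this
    have h1n : ‖(1:ℂ)‖ = 1 := by simp
    -- ‖1‖ - ‖z*T‖ ≤ ‖1 + z*T - z*T‖ ... rework
    have htri : ‖(1:ℂ)‖ ≤ ‖1 + z * T.eval z‖ + ‖z * T.eval z‖ := by
      calc ‖(1:ℂ)‖ = ‖(1 + z * T.eval z) - z * T.eval z‖ := by ring_nf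
        _ ≤ _ := norm_sub_le _ _
    rw [h1n] at htri
    linarith
  have hdenne : (1 : ℂ) + z * T.eval z ≠ 0 := by
    intro h
    rw [h] at hden
    simp at hden
    linarith
  have hfne : f z ≠ 0 := by
    rw [hfz z]
    exact mul_ne_zero hz0 hdenne
  refine ⟨hfne, ?_⟩
  have hfsq : (f z)^2 ≠ 0 := pow_ne_zero _ hfne
  have key : deriv f z * z^2 * ((f z)^2)⁻¹ - 1 = z^4 * M.eval z * ((f z)^2)⁻¹ := by
    field_simp
    linear_combination hnum z
  rw [key]
  rw [norm_mul, norm_mul, norm_inv, norm_pow, norm_pow]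
  have hfznorm : ‖f z‖ ≥ ‖z‖ * (1/2) := by
    rw [hfz z, norm_mul]
    have := mul_le_mul_of_nonneg_left hden (norm_nonneg z)
    linarith [mul_le_mul_of_nonneg_left hden (norm_nonneg z)]
  have hz0' : 0 < ‖z‖ := norm_pos_iff.2 hz0
  have hfz0' : 0 < ‖f z‖ := norm_pos_iff.2 hfne
  have hMz : ‖M.eval z‖ ≤ B := hB z (by simpa [Metric.mem_closedBall, dist_zero_right] using hzδ)
  have hfsq' : ‖z‖^2 * (1/4) ≤ ‖f z‖^2 := by nlinarith
  calc ‖z‖^4 * ‖M.eval z‖ * (‖f z‖^2)⁻¹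
      ≤ ‖z‖^4 * B * (‖z‖^2 * (1/4))⁻¹ := by
        apply mul_le_mul
        · exact mul_le_mul_of_nonneg_left hMz (by positivity)
        · apply inv_anti₀
          · positivity
          · exact hfsq'
        · positivity
        · positivity
    _ = 4 * B * ‖z‖^2 := by
        have h2' : (‖z‖^2:ℝ)⁻¹ * ‖z‖^2 = 1 := inv_mul_cancel₀ (by positivity)
        rw [mul_inv]
        linear_combination (4*B*‖z‖^2 : ℝ) * h2' 


private lemma aux_rate (g : ℕ → ℂ) (a L : ℂ) (hg0 : ∀ n, g n ≠ 0)
    (hu : Tendsto (fun n : ℕ => -1 / g n - n - (1 - a) * Real.log n) atTop (nhds L)) :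
    ∀ᶠ n : ℕ in atTop, ‖g n‖ ≤ 2 / n := by
  set u : ℕ → ℂ := fun n => -1 / g n - n - (1 - a) * Real.log n with hudef
  have hub : ∀ᶠ n : ℕ in atTop, ‖u n‖ ≤ ‖L‖ + 1 := by
    have : ∀ᶠ n : ℕ in atTop, ‖u n - L‖ < 1 := by
      have := hu.sub_const L
      exact (this.norm).eventually_lt_const (by norm_num) |>.mono (fun n h => h)
    filter_upwards [this] with n h
    calc ‖u n‖ = ‖(u n - L) + L‖ := by ring_nf
      _ ≤ ‖u n - L‖ + ‖L‖ := norm_add_le _ _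
      _ ≤ ‖L‖ + 1 := by linarith
  -- log grows slower than n
  have hlog : ∀ᶠ n : ℕ in atTop, ‖1 - a‖ * |Real.log n| ≤ (n:ℝ)/4 := by
    have h1 : (fun x : ℝ => ‖1 - a‖ * Real.log x) =o[atTop] id :=
      (Real.isLittleO_log_id_atTop).const_mul_left _
    have h2 : (fun n : ℕ => ‖1 - a‖ * Real.log n) =o[atTop] (fun n : ℕ => (n:ℝ)) :=
      h1.comp_tendsto tendsto_natCast_atTop_atTop
    have h3 := h2.def (by norm_num : (0:ℝ) < 1/4)
    filter_upwards [h3, eventually_ge_atTop 1] with n h hn1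
    have hln : 0 ≤ Real.log n := Real.log_nonneg (by exact_mod_cast hn1)
    have h' : ‖1 - a‖ * Real.log n ≤ 1/4 * n := by
      simp only [Real.norm_eq_abs] at h
      rw [abs_of_nonneg (mul_nonneg (norm_nonneg _) hln),
        abs_of_nonneg (by positivity : (0:ℝ) ≤ (n:ℝ))] at h
      exact h
    rw [abs_of_nonneg hln]
    linarith
  have hK : ∀ᶠ n : ℕ in atTop, ‖L‖ + 1 ≤ (n:ℝ)/4 := by
    have := tendsto_natCast_atTop_atTop (R := ℝ)
    filter_upwards [this.eventually_ge_atTop (4 * (‖L‖ + 1))] with n h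
    linarith
  filter_upwards [hub, hlog, hK, eventually_ge_atTop 1] with n h1 h2 h3 hn1
  have hnpos : (0:ℝ) < n := by exact_mod_cast hn1
  have hginv : ‖g n‖⁻¹ ≥ (n:ℝ)/2 := by
    have : ‖(-1 : ℂ) / g n‖ = ‖g n‖⁻¹ := by
      rw [norm_div, norm_neg, norm_one, one_div]
    rw [← this]
    have hdecomp : (-1:ℂ) / g n = u n + n + (1 - a) * Real.log n := by
      rw [hudef]; ring
    rw [hdecomp]
    have : ‖(n:ℂ)‖ ≤ ‖u n + n + (1 - a) * Real.log n‖ + ‖u n‖ + ‖(1-a) * (Real.log n : ℂ)‖ := by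
      calc ‖(n:ℂ)‖ = ‖(u n + n + (1 - a) * Real.log n) - u n - (1-a) * (Real.log n:ℂ)‖ := by
            ring_nf
        _ ≤ _ := by
            refine le_trans (norm_sub_le _ _) ?_
            gcongr
            exact norm_sub_le _ _
    have hnc : ‖(n:ℂ)‖ = (n:ℝ) := by
      simp [Complex.norm_natCast]
    have hlogc : ‖(1-a) * (Real.log n : ℂ)‖ = ‖1-a‖ * |Real.log n| := by
      rw [norm_mul, Complex.norm_real, Real.norm_eq_abs]
    rw [hnc, hlogc] at this
    linarith
  have hgpos : 0 < ‖g n‖ := norm_pos_iff.2 (hg0 n)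
  rw [ge_iff_le, le_inv_comm₀ (by positivity) hgpos] at hginv
  calc ‖g n‖ ≤ ((n:ℝ)/2)⁻¹ := hginv
    _ = 2/n := by field_simp


private lemma aux_limit (w : ℕ → ℂ) (ε : ℕ → ℝ) (L : ℂ)
    (hε0 : ∀ n, 0 ≤ ε n) (hsum : Summable ε)
    (hwne : ∀ n, 1 ≤ n → w n ≠ 0)
    (hrec : ∀ n, 1 ≤ n → ‖w n‖ * (1 - ε n) ≤ ‖w (n+1)‖)
    (hwt : Tendsto w atTop (nhds L)) : L ≠ 0 := by
  -- Cauchy criterion on partial sums of ε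
  set S : ℕ → ℝ := fun n => ∑ i ∈ Finset.range n, ε i with hSdef
  have hStend : Tendsto S atTop (nhds (∑' i, ε i)) := hsum.hasSum.tendsto_sum_nat
  have hScauchy : CauchySeq S := hStend.cauchySeq
  obtain ⟨N₀, hN₀⟩ := Metric.cauchySeq_iff'.1 hScauchy (1/2) (by norm_num)
  set N := max N₀ 1 with hNdef
  have hN1 : 1 ≤ N := le_max_right _ _
  have htail : ∀ n, N ≤ n → ∑ k ∈ Finset.Ico N n, ε k ≤ 1/2 := by
    intro n hn
    have hsub : Finset.Ico N n ⊆ Finset.Ico N₀ n :=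
      Finset.Ico_subset_Ico (le_max_left _ _) le_rfl
    have h1 : ∑ k ∈ Finset.Ico N n, ε k ≤ ∑ k ∈ Finset.Ico N₀ n, ε k :=
      Finset.sum_le_sum_of_subset_of_nonneg hsub (fun i _ _ => hε0 i)
    have hN₀n : N₀ ≤ n := le_trans (le_max_left _ _) hn
    have h2 := hN₀ n hN₀n
    rw [Real.dist_eq] at h2
    have h3 : S n - S N₀ = ∑ k ∈ Finset.Ico N₀ n, ε k := by
      rw [hSdef]
      simp only
      rw [Finset.sum_Ico_eq_sub _ hN₀n]
    have h4 : |S n - S N₀| < 1/2 := h2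
    rw [h3] at h4
    have := le_abs_self (∑ k ∈ Finset.Ico N₀ n, ε k)
    linarith [abs_lt.1 h4]
  -- main induction
  have hmain : ∀ n, N ≤ n → ‖w N‖ * (1 - ∑ k ∈ Finset.Ico N n, ε k) ≤ ‖w n‖ := by
    intro n hn
    induction n, hn using Nat.le_induction with
    | base => simp
    | succ n hn ih =>
      have hSn : ∑ k ∈ Finset.Ico N n, ε k ≤ 1/2 := htail n hn
      have hSn1 : ∑ k ∈ Finset.Ico N (n+1), ε k ≤ 1/2 := htail (n+1) (by omega)
      have hsplit : ∑ k ∈ Finset.Ico N (n+1), ε k = (∑ k ∈ Finset.Ico N n, ε k) + ε n :=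
        Finset.sum_Ico_succ_top hn _
      have hεn : ε n ≤ 1/2 := by
        have hnn : 0 ≤ ∑ k ∈ Finset.Ico N n, ε k := Finset.sum_nonneg (fun i _ => hε0 i)
        linarith
      have hr := hrec n (le_trans hN1 hn)
      have hw0 : 0 ≤ ‖w n‖ := norm_nonneg _
      have hwN0 : 0 ≤ ‖w N‖ := norm_nonneg _
      have hSnn : 0 ≤ ∑ k ∈ Finset.Ico N n, ε k := Finset.sum_nonneg (fun i _ => hε0 i)
      have step : ‖w N‖ * (1 - ∑ k ∈ Finset.Ico N n, ε k) * (1 - ε n) ≤ ‖w n‖ * (1 - ε n) :=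
        mul_le_mul_of_nonneg_right ih (by linarith [hε0 n])
      rw [hsplit]
      nlinarith [step, hr, mul_nonneg (mul_nonneg hwN0 hSnn) (hε0 n)]
  -- conclude
  have hwN : 0 < ‖w N‖ := norm_pos_iff.2 (hwne N hN1)
  have hlb : ∀ n, N ≤ n → ‖w N‖ * (1/2) ≤ ‖w n‖ := by
    intro n hn
    have h1 := hmain n hn
    have h2 := htail n hn
    nlinarith
  have hnorm : Tendsto (fun n => ‖w n‖) atTop (nhds ‖L‖) := hwt.norm
  have hLlb : ‖w N‖ * ( 1/2) ≤ ‖L‖ := by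
    refine ge_of_tendsto hnorm ?_
    filter_upwards [eventually_ge_atTop N] with n hn using hlb n hn
  intro hL0
  rw [hL0, norm_zero] at hLlb
  nlinarith


theorem stmt_12 (P : Polynomial ℂ) (a : ℂ)
    (h0 : P.coeff 0 = 0) (h1 : P.coeff 1 = 1) (h2 : P.coeff 2 = 1) (h3 : P.coeff 3 = a)
    (f : ℂ → ℂ) (hfP : f = fun z => P.eval z)
    (U : Set ℂ) (hU : IsOpen U) (c : ℂ) (hc : c ∈ U)
    (hinv : ∀ z ∈ U, ∀ k : ℕ, f^[k] z ∈ U ∧ f^[k] z ≠ 0)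
    (φ : ℂ → ℂ)
    (hφ : TendstoLocallyUniformlyOn
      (fun (n : ℕ) (z : ℂ) => -1 / f^[n] z - n - (1 - a) * Real.log n) φ atTop U)
    (hcrit : deriv f c = 0)
    (hbasin : Tendsto (fun n : ℕ => f^[n] c) atTop (nhds 0)) :
    iteratedDeriv 2 φ c = 0 ↔
      (iteratedDeriv 2 f c = 0 ∨ ∃ k : ℕ, 1 ≤ k ∧ deriv f (f^[k] c) = 0) := by
  -- basic differentiability facts
  have hfd : Differentiable ℂ f := by rw [hfP]; exact P.differentiable
  have hpoly : ∀ n : ℕ, ∃ Q : Polynomial ℂ, f^[n] = fun z => Q.eval z := by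
    intro n
    induction n with
    | zero => exact ⟨Polynomial.X, by funext z; simp⟩
    | succ n ih =>
      obtain ⟨Q, hQ⟩ := ih
      refine ⟨Q.comp P, ?_⟩
      funext z
      rw [Function.iterate_succ_apply, hQ, Polynomial.eval_comp]
      simp [hfP]
  have hitd : ∀ n : ℕ, Differentiable ℂ (f^[n]) := by
    intro n; obtain ⟨Q, hQ⟩ := hpoly n; rw [hQ]; exact Q.differentiable
  have hitd' : ∀ n : ℕ, Differentiable ℂ (deriv (f^[n])) := by
    intro n; obtain ⟨Q, hQ⟩ := hpoly n
    have : deriv (f^[n]) = fun z => Q.derivative.eval z := by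
      funext z; rw [hQ]; exact Polynomial.deriv (p := Q)
    rw [this]; exact Q.derivative.differentiable
  have hfd' : Differentiable ℂ (deriv f) := by
    have : deriv f = fun z => P.derivative.eval z := by
      funext z; rw [hfP]; exact Polynomial.deriv (p := P)
    rw [this]; exact P.derivative.differentiable
  set g : ℕ → ℂ := fun n => f^[n] c with hgdef
  have hg0 : ∀ n, g n ≠ 0 := fun n => (hinv c hc n).2
  -- the approximating sequence
  set F : ℕ → ℂ → ℂ := fun (n : ℕ) (z : ℂ) => -1 / f^[n] z - n - (1 - a) * Real.log n with hF
  have hΦdiff : ∀ n : ℕ, DifferentiableOn ℂ (F n) U := by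
    intro n
    refine DifferentiableOn.sub_const (DifferentiableOn.sub_const ?_ _) _
    exact (differentiableOn_const (-1)).div ((hitd n).differentiableOn)
      (fun z hz => (hinv z hz n).2)
  have hd1 : TendstoLocallyUniformlyOn (deriv ∘ F) (deriv φ) atTop U :=
    hφ.deriv (Eventually.of_forall hΦdiff) hU
  set ψ : ℕ → ℂ → ℂ := fun n z => deriv (f^[n]) z * ((f^[n] z)^2)⁻¹ with hψ
  have hψeq : ∀ n : ℕ, Set.EqOn (deriv (F n)) (ψ n) U := by
    intro n z hz
    have hne : f^[n] z ≠ 0 := (hinv z hz n).2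
    have h1 : HasDerivAt (fun w => (f^[n] w)⁻¹) (-(deriv (f^[n]) z) / (f^[n] z)^2) z :=
      ((hitd n z).hasDerivAt).inv hne
    have h2 : HasDerivAt (F n) (deriv (f^[n]) z * ((f^[n] z)^2)⁻¹) z := by
      have h3 : HasDerivAt (fun w : ℂ => -(f^[n] w)⁻¹ - n - (1 - a) * Real.log n)
          (deriv (f^[n]) z * ((f^[n] z)^2)⁻¹) z := by
        have h4 := (h1.neg.sub_const (n:ℂ)).sub_const ((1 - a) * Real.log n)
        exact h4.congr_deriv (by ring)
      rw [hF]
      convert h3 using 2 with w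
      ring
    exact h2.deriv
  have hψdiff : ∀ n : ℕ, DifferentiableOn ℂ (ψ n) U := by
    intro n
    exact ((hitd' n).differentiableOn).mul
      ((((hitd n).pow 2).differentiableOn).inv
        (fun z hz => pow_ne_zero _ (hinv z hz n).2))
  have hd2 : TendstoLocallyUniformlyOn (deriv ∘ (deriv ∘ F)) (deriv (deriv φ)) atTop U :=
    hd1.deriv (Eventually.of_forall fun n => ((hψdiff n).congr (hψeq n))) hU
  have htends : Tendsto (fun n => deriv (deriv (F n)) c) atTop (nhds (deriv (deriv φ) c)) :=
    hd2.tendsto_at hc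
  have hiter2φ : iteratedDeriv 2 φ c = deriv (deriv φ) c := by
    rw [iteratedDeriv_succ, iteratedDeriv_one]
  have hiter2f : iteratedDeriv 2 f c = deriv (deriv f) c := by
    rw [iteratedDeriv_succ, iteratedDeriv_one]
  -- derivative of iterates at the critical point
  have hD : ∀ n : ℕ, 1 ≤ n → deriv (f^[n]) c = 0 ∧
      deriv (deriv (f^[n])) c = deriv (deriv f) c * ∏ k ∈ Finset.Ico 1 n, deriv f (f^[k] c) := by
    have hder_iter : ∀ n : ℕ, deriv (f^[n+1]) = fun z => deriv f (f^[n] z) * deriv (f^[n]) z := by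
      intro n
      funext z
      rw [Function.iterate_succ']
      exact deriv_comp z (hfd _) (hitd n z)
    intro n hn
    induction n with
    | zero => omega
    | succ n ih =>
      rcases Nat.eq_or_lt_of_le hn with h1 | h1
      · have hn0 : n = 0 := by omega
        subst hn0
        constructor
        · simp only [zero_add, Function.iterate_one, hcrit]
        · simp only [zero_add, Function.iterate_one, Finset.Ico_self, Finset.prod_empty, mul_one]
      · have hn1 : 1 ≤ n := by omega
        obtain ⟨ih1, ih2⟩ := ih hn1
        have hA : Differentiable ℂ (fun z => deriv f (f^[n] z)) := hfd'.comp (hitd n)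
        constructor
        · rw [hder_iter n]
          show deriv f (f^[n] c) * deriv (f^[n]) c = 0
          rw [ih1, mul_zero]
        · rw [hder_iter n, deriv_fun_mul (hA c) (hitd' n c), ih1, ih2,
            Finset.prod_Ico_succ_top hn1]
          have hz : deriv (fun z => deriv f (f^[n] z)) c * 0 = 0 := mul_zero _
          rw [hz]
          ring
  set w : ℕ → ℂ := fun n =>
    deriv (deriv f) c * (∏ k ∈ Finset.Ico 1 n, deriv f (f^[k] c)) * ((f^[n] c)^2)⁻¹ with hw
  have step8 : ∀ n : ℕ, 1 ≤ n → deriv (deriv (F n)) c = w n := by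
    intro n hn
    have hev : deriv (F n) =ᶠ[nhds c] ψ n := Filter.eventuallyEq_of_mem (hU.mem_nhds hc) (hψeq n)
    rw [hev.deriv_eq, hψ]
    have hB : DifferentiableAt ℂ (fun z => ((f^[n] z)^2)⁻¹) c :=
      (((hitd n).pow 2) c).inv (pow_ne_zero _ (hinv c hc n).2)
    rw [deriv_fun_mul (hitd' n c) hB, (hD n hn).1, zero_mul, add_zero, hw, (hD n hn).2]
  have hwt : Tendsto w atTop (nhds (iteratedDeriv 2 φ c)) := by
    rw [hiter2φ]
    refine htends.congr' ?_
    filter_upwards [eventually_ge_atTop 1] with n hn using step8 n hn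
  constructor
  · -- hard direction
    intro hzero
    by_contra hcon
    push_neg at hcon
    obtain ⟨hf2, hk⟩ := hcon
    have hf2' : deriv (deriv f) c ≠ 0 := by rwa [hiter2f] at hf2
    obtain ⟨δ, hδpos, C, hC0, hCb⟩ := aux_bound P a h0 h1 h2 h3 f hfP
    set ε : ℕ → ℝ :=
      fun n => ‖deriv f (f^[n] c) * (f^[n] c)^2 * ((f (f^[n] c))^2)⁻¹ - 1‖ with hε
    have hε0 : ∀ n, 0 ≤ ε n := fun n => norm_nonneg _
    have hgf : ∀ n : ℕ, f^[n+1] c = f (f^[n] c) := fun n => Function.iterate_succ_apply' f n c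
    have hg0' : ∀ n : ℕ, f^[n] c ≠ 0 := fun n => (hinv c hc n).2
    have hu : Tendsto (fun n : ℕ => -1 / (f^[n] c) - n - (1 - a) * Real.log n)
        atTop (nhds (φ c)) := hφ.tendsto_at hc
    have hrate : ∀ᶠ n : ℕ in atTop, ‖f^[n] c‖ ≤ 2/n :=
      aux_rate (fun n => f^[n] c) a (φ c) hg0' hu
    have hsmallev : ∀ᶠ n : ℕ in atTop, ‖f^[n] c‖ ≤ δ := by
      filter_upwards [hbasin.eventually_mem (Metric.closedBall_mem_nhds 0 hδpos)] with n hn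
      simpa [Metric.mem_closedBall, dist_zero_right] using hn
    have hεb : ∀ᶠ n : ℕ in atTop, ε n ≤ (4*C)/(n:ℝ)^2 := by
      filter_upwards [hrate, hsmallev, eventually_ge_atTop 1] with n e1 e2 e3
      obtain ⟨hfne, hb⟩ := hCb (f^[n] c) (hg0' n) e2
      have hnpos : (0:ℝ) < n := by exact_mod_cast e3
      have hsq : ‖f^[n] c‖^2 ≤ (2/(n:ℝ))^2 := by
        apply pow_le_pow_left₀ (norm_nonneg _) e1
      calc ε n ≤ C * ‖f^[n] c‖^2 := hb
        _ ≤ C * (2/(n:ℝ))^2 := mul_le_mul_of_nonneg_left hsq hC0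
        _ = 4*C/(n:ℝ)^2 := by field_simp; ring
    obtain ⟨N₂, hN₂⟩ := eventually_atTop.1 hεb
    have hsumbase : Summable (fun n : ℕ => (4*C) / ((n:ℝ))^2) := by
      have hs := (Real.summable_one_div_nat_pow (p := 2)).2 (by norm_num)
      have := hs.mul_left (4*C)
      refine this.congr (fun n => ?_)
      field_simp
    have hsum : Summable ε := by
      have hshift : Summable (fun n : ℕ => (4*C) / (((n + N₂ : ℕ)):ℝ)^2) :=
        (summable_nat_add_iff (f := fun n : ℕ => (4*C) / ((n:ℝ))^2) N₂).2 hsumbase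
      have h1 : Summable (fun n : ℕ => ε (n + N₂)) :=
        Summable.of_nonneg_of_le (fun n => hε0 _) (fun n => hN₂ (n + N₂) (by omega)) hshift
      exact (summable_nat_add_iff (f := ε) N₂).1 h1
    have hwne : ∀ n, 1 ≤ n → w n ≠ 0 := by
      intro n hn
      rw [hw]
      simp only
      refine mul_ne_zero (mul_ne_zero hf2' ?_) (inv_ne_zero (pow_ne_zero _ (hg0' n)))
      exact Finset.prod_ne_zero_iff.2 (fun k hkm => hk k (Finset.mem_Ico.1 hkm).1)
    have hrecn : ∀ n, 1 ≤ n → ‖w n‖ * (1 - ε n) ≤ ‖w (n+1)‖ := by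
      intro n hn
      have hprod : w (n+1) = w n * (deriv f (f^[n] c) * (f^[n] c)^2 * ((f (f^[n] c))^2)⁻¹) := by
        rw [hw]
        simp only
        rw [Finset.prod_Ico_succ_top hn, hgf n]
        have hinv2 : ((f^[n] c)^2) * ((f^[n] c)^2)⁻¹ = 1 :=
          mul_inv_cancel₀ (pow_ne_zero _ (hg0' n))
        linear_combination (-(deriv (deriv f) c * (∏ k ∈ Finset.Ico 1 n, deriv f (f^[k] c)) *
          ((f (f^[n] c))^2)⁻¹ * deriv f (f^[n] c))) * hinv2
      have hnorm1 : ‖w (n+1)‖ =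
          ‖w n‖ * ‖deriv f (f^[n] c) * (f^[n] c)^2 * ((f (f^[n] c))^2)⁻¹‖ := by
        rw [hprod]; exact norm_mul _ _
      rw [hnorm1]
      have h1' : 1 - ε n ≤ ‖deriv f (f^[n] c) * (f^[n] c)^2 * ((f (f^[n] c))^2)⁻¹‖ := by
        set X := deriv f (f^[n] c) * (f^[n] c)^2 * ((f (f^[n] c))^2)⁻¹ with hX
        have htri : ‖(1:ℂ)‖ ≤ ‖X‖ + ‖X - 1‖ := by
          calc ‖(1:ℂ)‖ = ‖X - (X - 1)‖ := by ring_nf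
            _ ≤ ‖X‖ + ‖X - 1‖ := norm_sub_le _ _
        rw [norm_one] at htri
        have hεn : ε n = ‖X - 1‖ := by rw [hε]
        linarith [hεn ▸ htri]
      exact mul_le_mul_of_nonneg_left h1' (norm_nonneg _)
    exact aux_limit w ε (iteratedDeriv 2 φ c) hε0 hsum hwne hrecn hwt hzero
  · -- easy direction
    intro h
    refine tendsto_nhds_unique hwt ?_
    rcases h with h | ⟨k, hk1, hk⟩
    · have : w = fun _ => 0 := by
        funext n; rw [hw]; rw [hiter2f] at h; simp [h]
      rw [this]; exact tendsto_const_nhds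
    · refine Tendsto.congr' ?_ (tendsto_const_nhds (x := (0:ℂ)))
      filter_upwards [eventually_ge_atTop (k+1)] with n hn
      have : (∏ j ∈ Finset.Ico 1 n, deriv f (f^[j] c)) = 0 :=
        Finset.prod_eq_zero (Finset.mem_Ico.2 ⟨hk1, by omega⟩) hk
      simp [hw, this]
end

section
/- Let (f_n) be univalent holomorphic functions on a uniform neighborhood of 0 with f_n(0) = 0 and λ_n := f_n'(0), such that the compositions f_{n,0} = f_n∘⋯∘f_1 are defined on a smaller neighborhood and form a normal family with |λ(n)| = |∏_{j=1}^n λ_j| bounded above and away from 0. Then the maps ψ_{n+1}(z) := f_{n,0}(λ(n)^{−1}z) are tangent to the identity at 0, uniformly bounded, and satisfy the linearization relation f_{n+1} ∘ ψ_{n+1}(z) = ψ_{n+2}(λ_{n+1} z); i.e. the sequence (f_n) is rotationally linearizable. -/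
open Metric

/-- `iterComp f m k z = f (m+k) (⋯ (f (m+1) z))`, i.e. the composition
`f_{m+k} ∘ ⋯ ∘ f_{m+1}` applied to `z`. -/
def iterComp (f : ℕ → ℂ → ℂ) (m : ℕ) : ℕ → ℂ → ℂ
  | 0, z => z
  | k + 1, z => f (m + k + 1) (iterComp f m k z)

theorem stmt_16 (f : ℕ → ℂ → ℂ) (r r' : ℝ) (hr : 0 < r') (hr' : r' ≤ r)
    (hdiff : ∀ n, AnalyticOn ℂ (f n) (ball (0:ℂ) r))
    (hinj : ∀ n, Set.InjOn (f n) (ball (0:ℂ) r))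
    (hfix : ∀ n, f n 0 = 0)
    (hmaps : ∀ n, Set.MapsTo (iterComp f 0 n) (ball (0:ℂ) r') (ball (0:ℂ) r))
    (M : ℝ) (hbdd : ∀ n, ∀ z ∈ ball (0:ℂ) r', ‖iterComp f 0 n z‖ ≤ M)
    (a b : ℝ) (ha : 0 < a)
    (hΛ : ∀ n : ℕ, a ≤ ‖∏ j ∈ Finset.Icc 1 n, deriv (f j) 0‖ ∧
      ‖∏ j ∈ Finset.Icc 1 n, deriv (f j) 0‖ ≤ b) :
    ∃ ρ > (0:ℝ), ∃ M' : ℝ,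
      (∀ n : ℕ,
        iterComp f 0 n ((∏ j ∈ Finset.Icc 1 n, deriv (f j) 0)⁻¹ * 0) = 0 ∧
        deriv (fun z => iterComp f 0 n ((∏ j ∈ Finset.Icc 1 n, deriv (f j) 0)⁻¹ * z)) 0 = 1) ∧
      (∀ n : ℕ, ∀ z ∈ ball (0:ℂ) ρ,
        ‖iterComp f 0 n ((∏ j ∈ Finset.Icc 1 n, deriv (f j) 0)⁻¹ * z)‖ ≤ M') ∧
      (∀ n : ℕ, ∀ z ∈ ball (0:ℂ) ρ,
        f (n + 1) (iterComp f 0 n ((∏ j ∈ Finset.Icc 1 n, deriv (f j) 0)⁻¹ * z)) =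
          iterComp f 0 (n + 1)
            ((∏ j ∈ Finset.Icc 1 (n + 1), deriv (f j) 0)⁻¹ * (deriv (f (n + 1)) 0 * z))) := by
  have hr0 : (0:ℝ) < r := lt_of_lt_of_le hr hr'
  set Λ : ℕ → ℂ := fun n => ∏ j ∈ Finset.Icc 1 n, deriv (f j) 0 with hΛdef
  have hΛne : ∀ n, Λ n ≠ 0 := by
    intro n h
    have h1 := (hΛ n).1
    rw [show (∏ j ∈ Finset.Icc 1 n, deriv (f j) 0) = Λ n from rfl, h] at h1
    simp at h1; linarith
  have hΛsucc : ∀ n, Λ (n + 1) = Λ n * deriv (f (n + 1)) 0 := by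
    intro n
    simp only [hΛdef]
    exact Finset.prod_Icc_succ_top (Nat.succ_le_succ (Nat.zero_le n)) _
  have hdz : ∀ n, DifferentiableAt ℂ (f n) 0 := by
    intro n
    exact ((hdiff n).differentiableOn).differentiableAt
      (isOpen_ball.mem_nhds (mem_ball_self hr0))
  have hzero : ∀ n, iterComp f 0 n 0 = 0 := by
    intro n; induction n with
    | zero => rfl
    | succ k ih => simp [iterComp, ih, hfix]
  have hder : ∀ n, HasDerivAt (iterComp f 0 n) (Λ n) 0 := by
    intro n; induction n with
    | zero =>
      rw [show Λ 0 = 1 by simp [hΛdef]]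
      exact hasDerivAt_id (0:ℂ)
    | succ k ih =>
      have h1 : HasDerivAt (f (k + 1)) (deriv (f (k + 1)) 0) (iterComp f 0 k 0) := by
        rw [hzero k]; exact (hdz (k + 1)).hasDerivAt
      have h2 := h1.comp 0 ih
      have h3 : HasDerivAt (iterComp f 0 (k + 1))
          (deriv (f (k + 1)) 0 * Λ k) 0 := by
        have e : iterComp f 0 (k + 1) = f (k + 1) ∘ iterComp f 0 k := by
          funext z
          simp [iterComp, Function.comp]
        rw [e]
        exact h2
      rw [hΛsucc k, mul_comm]
      exact h3
  refine ⟨a * r', mul_pos ha hr, M, ?_, ?_, ?_⟩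
  · intro n
    constructor
    · rw [mul_zero, hzero n]
    · have hlin : HasDerivAt (fun z : ℂ => (Λ n)⁻¹ * z) (Λ n)⁻¹ 0 := by
        simpa using (hasDerivAt_id (0:ℂ)).const_mul ((Λ n)⁻¹)
      have h1 : HasDerivAt (iterComp f 0 n) (Λ n) ((Λ n)⁻¹ * 0) := by
        rw [mul_zero]; exact hder n
      have h2 := h1.comp 0 hlin
      have h3 : HasDerivAt (fun z => iterComp f 0 n ((Λ n)⁻¹ * z)) (Λ n * (Λ n)⁻¹) 0 :=
        h2
      rw [h3.deriv, mul_inv_cancel₀ (hΛne n)]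
  · intro n z hz
    apply hbdd n
    simp only [mem_ball, dist_zero_right] at hz ⊢
    rw [norm_mul, norm_inv]
    have h1 : a ≤ ‖Λ n‖ := (hΛ n).1
    have h2 : (0:ℝ) < ‖Λ n‖ := lt_of_lt_of_le ha h1
    rw [inv_mul_lt_iff₀ h2]
    calc ‖z‖ < a * r' := hz
      _ ≤ ‖Λ n‖ * r' := by nlinarith
  · intro n z _
    have hderne : deriv (f (n + 1)) 0 ≠ 0 := by
      intro h
      apply hΛne (n + 1)
      rw [hΛsucc n, h, mul_zero]
    have harg : (Λ (n + 1))⁻¹ * (deriv (f (n + 1)) 0 * z) = (Λ n)⁻¹ * z := by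
      rw [hΛsucc n]
      calc (Λ n * deriv (f (n + 1)) 0)⁻¹ * (deriv (f (n + 1)) 0 * z)
          = (Λ n)⁻¹ * ((deriv (f (n + 1)) 0)⁻¹ * deriv (f (n + 1)) 0) * z := by
            rw [mul_inv]; ring
        _ = (Λ n)⁻¹ * z := by rw [inv_mul_cancel₀ hderne, mul_one]
    rw [harg]
    simp [iterComp]
    rfl
end
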